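/- Theorem (NSF + cardinality-monotonicity implies effective neighbourhood search): Suppose for each fitness value v with v_ge < v < v_max the following hold: (a) unskewedness: pn^+_v = ∑_{δ∈Δ} pn_{v,δ}·p^+_{v,δ} and p^+_v = ∑_{δ∈Δ} p_{v,δ}·p^+_{v,δ}; (b) NSF: δ ↦ pn_{v,δ} − p_{v,δ} is monotonically non-increasing on Δ, pn_{v,1} > p_{v,1}, and ∑_{δ∈Δ}(pn_{v,δ} − p_{v,δ}) ≥ 0; (c) cardinality-monotonicity, implying δ ↦ p^+_{v,δ} is monotonically non-increasing on Δ with p^+_{v,δ} > 0 for δ ≤ v_max − v. Then pn^+_v > p^+_v, i.e., a random neighbour of a solution with fitness v is strictly more likely to improve on v than a uniformly random solution. -/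

import Mathlib

/-- Abel-type lemma: if `Q` is non-increasing on `[0,n]` and all partial sums of `D`
up to `n` are nonnegative, then `∑_{i<n} D i * Q i ≥ Q n * ∑_{i<n} D i`. -/
lemma aux_abel (D Q : ℕ → ℝ) : ∀ n : ℕ,
    (∀ i j, i ≤ j → j ≤ n → Q j ≤ Q i) →
    (∀ j, j ≤ n → 0 ≤ ∑ i ∈ Finset.range j, D i) →
    Q n * ∑ i ∈ Finset.range n, D i ≤ ∑ i ∈ Finset.range n, D i * Q i := by
  intro n
  induction n with
  | zero => intro _ _; simp
  | succ n ih =>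
    intro hQ hS
    have h1 := ih (fun i j hij hj => hQ i j hij (le_trans hj (Nat.le_succ n)))
      (fun j hj => hS j (le_trans hj (Nat.le_succ n)))
    have hSn1 := hS (n + 1) le_rfl
    have hQn := hQ n (n + 1) (Nat.le_succ n) le_rfl
    rw [Finset.sum_range_succ, Finset.sum_range_succ]
    rw [Finset.sum_range_succ] at hSn1
    have h2 : Q (n + 1) * (∑ i ∈ Finset.range n, D i + D n)
        ≤ Q n * (∑ i ∈ Finset.range n, D i + D n) :=
      mul_le_mul_of_nonneg_right hQn hSn1
    nlinarith [h1, h2]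

/-- Theorem 1: NSF + cardinality-monotonicity implies neighbourhood search is
effective at every fitness `v` with `v_ge < v < v_max`. Here `pn v δ` and `p v δ`
are the proportions of neighbours (resp. of all solutions) at fitness distance `δ`
from `v`, and `q v δ = p⁺_{v,δ}` is the conditional probability of improvement. -/
theorem nsf_card_monotonic_implies_effective
    (vmax vge : ℤ) (pn p q : ℤ → ℤ → ℝ) (pnplus pplus : ℤ → ℝ)
    (v : ℤ) (hv₁ : vge < v) (hv₂ : v < vmax)
    -- (a) unskewedness
    (hpnplus : pnplus v = ∑ δ ∈ Finset.Icc 1 (vmax - vge), pn v δ * q v δ)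
    (hpplus : pplus v = ∑ δ ∈ Finset.Icc 1 (vmax - vge), p v δ * q v δ)
    -- nonnegativity of proportions
    (hpn0 : ∀ δ ∈ Finset.Icc 1 (vmax - vge), 0 ≤ pn v δ)
    (hp0 : ∀ δ ∈ Finset.Icc 1 (vmax - vge), 0 ≤ p v δ)
    -- (b) NSF
    (hmono : ∀ δ ∈ Finset.Icc 1 (vmax - vge), ∀ δ' ∈ Finset.Icc 1 (vmax - vge),
      δ ≤ δ' → pn v δ' - p v δ' ≤ pn v δ - p v δ)
    (hstrict : p v 1 < pn v 1)
    (hsum : 0 ≤ ∑ δ ∈ Finset.Icc 1 (vmax - vge), (pn v δ - p v δ))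
    -- (c) consequences of cardinality-monotonicity
    (hqmono : ∀ δ ∈ Finset.Icc 1 (vmax - vge), ∀ δ' ∈ Finset.Icc 1 (vmax - vge),
      δ ≤ δ' → q v δ' ≤ q v δ)
    (hqpos : ∀ δ : ℤ, 1 ≤ δ → δ ≤ vmax - v → 0 < q v δ)
    (hqzero : ∀ δ : ℤ, vmax - v < δ → q v δ = 0) :
    pplus v < pnplus v := by
  set M : ℤ := vmax - vge with hMdef
  set N : ℕ := M.toNat with hNdef
  set mm : ℕ := (vmax - v).toNat with hmmdef
  have hm1 : (1:ℤ) ≤ vmax - v := by omega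
  have hmmZ : (mm : ℤ) = vmax - v := Int.toNat_of_nonneg (by omega)
  have hNZ : (N : ℤ) = M := Int.toNat_of_nonneg (by omega)
  have hmm1 : 1 ≤ mm := by omega
  have hmmN : mm + 1 ≤ N := by omega
  -- reindexing: sums over `Icc 1 M` as sums over `range N`
  have key : ∀ f : ℤ → ℝ, ∑ δ ∈ Finset.Icc 1 M, f δ = ∑ i ∈ Finset.range N, f (1 + i) := by
    intro f
    refine Finset.sum_nbij' (fun δ => (δ - 1).toNat) (fun i => 1 + (i : ℤ)) ?_ ?_ ?_ ?_ ?_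
    · intro a ha
      simp only [Finset.mem_Icc] at ha
      simp only [Finset.mem_range]
      omega
    · intro a ha
      simp only [Finset.mem_range] at ha
      simp only [Finset.mem_Icc]
      omega
    · intro a ha
      simp only [Finset.mem_Icc] at ha
      omega
    · intro a _
      omega
    · intro a ha
      simp only [Finset.mem_Icc] at ha
      congr 1
      omega
  -- translated data
  set D : ℕ → ℝ := fun i => pn v (1 + i) - p v (1 + i) with hDdef
  set Q : ℕ → ℝ := fun i => q v (1 + i) with hQdef
  have hmemIcc : ∀ i : ℕ, i + 1 ≤ N → (1 + (i:ℤ)) ∈ Finset.Icc 1 M := by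
    intro i hi
    simp only [Finset.mem_Icc]
    omega
  have hQ0 : ∀ i : ℕ, 0 ≤ Q i := by
    intro i
    by_cases h : (1 + (i:ℤ)) ≤ vmax - v
    · exact le_of_lt (hqpos _ (by omega) h)
    · simp only [hQdef]
      rw [hqzero _ (by omega)]
  have hDmono : ∀ i j : ℕ, i ≤ j → j + 1 ≤ N → D j ≤ D i := by
    intro i j hij hj
    exact hmono _ (hmemIcc i (by omega)) _ (hmemIcc j hj) (by omega)
  have hD0 : 0 < D 0 := by
    simp only [hDdef, Nat.cast_zero, add_zero]
    linarith
  have hsum' : 0 ≤ ∑ i ∈ Finset.range N, D i := by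
    have := key (fun δ => pn v δ - p v δ)
    rw [this] at hsum
    exact hsum
  -- strict positivity of partial sums up to mm
  have hSpos : ∀ j : ℕ, 1 ≤ j → j ≤ mm → 0 < ∑ i ∈ Finset.range j, D i := by
    intro j hj1 hjmm
    by_contra hcon
    push_neg at hcon
    have hjN : j + 1 ≤ N := by omega
    by_cases hDj : 0 ≤ D (j - 1)
    · -- all terms up to j-1 are ≥ D (j-1) ≥ 0, and D 0 > 0
      have hterms : ∀ i ∈ Finset.range j, 0 ≤ D i := by
        intro i hi
        simp only [Finset.mem_range] at hi
        exact le_trans hDj (hDmono i (j-1) (by omega) (by omega))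
      have h0j : (0:ℕ) ∈ Finset.range j := by simp; omega
      have := Finset.single_le_sum hterms h0j
      linarith
    · push_neg at hDj
      -- all terms from j to N-1 are < 0
      have htail : ∑ i ∈ Finset.Ico j N, D i < 0 := by
        have hne : (Finset.Ico j N).Nonempty := by
          rw [Finset.nonempty_Ico]; omega
        have : ∀ i ∈ Finset.Ico j N, D i < 0 := by
          intro i hi
          simp only [Finset.mem_Ico] at hi
          exact lt_of_le_of_lt (hDmono (j-1) i (by omega) (by omega)) hDj
        exact Finset.sum_neg this hne
      have hsplit : ∑ i ∈ Finset.range j, D i + ∑ i ∈ Finset.Ico j N, D i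
          = ∑ i ∈ Finset.range N, D i := by
        rw [Finset.range_eq_Ico, Finset.range_eq_Ico]
        exact Finset.sum_Ico_consecutive D (Nat.zero_le j) (by omega)
      linarith
  -- Q is non-increasing on [0, mm-1] (indeed on all of [0, N-1] and beyond)
  have hQmono : ∀ i j : ℕ, i ≤ j → j ≤ mm - 1 → Q j ≤ Q i := by
    intro i j hij hj
    exact hqmono _ (hmemIcc i (by omega)) _ (hmemIcc j (by omega)) (by omega)
  -- apply Abel lemma with n = mm - 1
  have habel := aux_abel D Q (mm - 1) hQmono
    (fun j hj => by
      rcases Nat.eq_zero_or_pos j with h | h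
      · simp [h]
      · exact le_of_lt (hSpos j h (by omega)))
  -- the positive part of the sum
  have hQpos : 0 < Q (mm - 1) := by
    apply hqpos
    · omega
    · omega
  have hSmm : 0 < ∑ i ∈ Finset.range mm, D i := hSpos mm hmm1 le_rfl
  have hmain : 0 < ∑ i ∈ Finset.range mm, D i * Q i := by
    have hmm' : mm = (mm - 1) + 1 := by omega
    rw [hmm', Finset.sum_range_succ]
    rw [hmm', Finset.sum_range_succ] at hSmm
    have : Q (mm-1) * (∑ i ∈ Finset.range (mm-1), D i + D (mm-1)) > 0 :=
      mul_pos hQpos hSmm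
    nlinarith [habel]
  -- tail of the sum is zero
  have htailzero : ∑ i ∈ Finset.Ico mm N, D i * Q i = 0 := by
    apply Finset.sum_eq_zero
    intro i hi
    simp only [Finset.mem_Ico] at hi
    have : Q i = 0 := hqzero _ (by omega)
    rw [this, mul_zero]
  have hsplit : ∑ i ∈ Finset.range N, D i * Q i
      = ∑ i ∈ Finset.range mm, D i * Q i + ∑ i ∈ Finset.Ico mm N, D i * Q i := by
    rw [Finset.range_eq_Ico, Finset.range_eq_Ico]
    exact (Finset.sum_Ico_consecutive _ (Nat.zero_le mm) (by omega)).symm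
  have hfinal : 0 < ∑ i ∈ Finset.range N, D i * Q i := by
    rw [hsplit, htailzero, add_zero]; exact hmain
  -- conclude
  rw [hpnplus, hpplus, ← sub_pos, ← Finset.sum_sub_distrib]
  have heq : ∑ δ ∈ Finset.Icc 1 M, (pn v δ * q v δ - p v δ * q v δ)
      = ∑ i ∈ Finset.range N, D i * Q i := by
    rw [key (fun δ => pn v δ * q v δ - p v δ * q v δ)]
    apply Finset.sum_congr rfl
    intro i _
    simp only [hDdef, hQdef]
    ring
  rw [heq]
  exact hfinal
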